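/- Let K be a field of characteristic zero, f ∈ K[x,y] irreducible with f_y ≠ 0, q ∈ K[x,y], and s ≥ 1. If q_y = f^s and f divides q_x in K[x,y], then f^s divides q_x. -/

import Mathlib

open MvPolynomial


lemma pderiv_comm' {K : Type*} [CommSemiring K] {σ : Type*} (i j : σ) (p : MvPolynomial σ K) :
    pderiv i (pderiv j p) = pderiv j (pderiv i p) := by
  classical
  have key : ∀ a b n : σ, pderiv a (pderiv b (X n) : MvPolynomial σ K) = 0 := by
    intro a b n
    by_cases h : b = n
    · subst h; simp
    · simp [pderiv_X_of_ne (Ne.symm h)]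
  induction p using MvPolynomial.induction_on with
  | C a => simp
  | add p q hp hq => simp [hp, hq]
  | mul_X r n ih =>
    simp only [pderiv_mul, map_add, key, mul_zero, add_zero, ih]
    ring

lemma coeff_pderiv' {K : Type*} [CommSemiring K] {σ : Type*} [DecidableEq σ] (i : σ)
    (m : σ →₀ ℕ) (f : MvPolynomial σ K) :
    coeff m (pderiv i f) = (m i + 1) * coeff (m + Finsupp.single i 1) f := by
  induction f using MvPolynomial.induction_on' with
  | add p q hp hq => simp [hp, hq, mul_add]
  | monomial s a =>
    rw [pderiv_monomial, coeff_monomial, coeff_monomial]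
    by_cases h2 : s = m + Finsupp.single i 1
    · subst h2
      have hm : m + Finsupp.single i 1 - Finsupp.single i 1 = m := by
        ext j; simp [Finsupp.single_apply]
      rw [if_pos hm, if_pos rfl]
      simp [Finsupp.single_apply, mul_comm]
    · rw [if_neg h2, mul_zero]
      by_cases h3 : s i = 0
      · split_ifs <;> simp [h3]
      · rw [if_neg]
        intro hsm
        apply h2
        ext j
        by_cases hj : j = i
        · subst hj
          have := congrArg (fun g : σ →₀ ℕ => g j) hsm
          simp [Finsupp.single_apply] at this ⊢
          omega
        · have := congrArg (fun g : σ →₀ ℕ => g j) hsm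
          simp [Finsupp.single_apply, Ne.symm hj] at this ⊢
          omega

lemma degreeOf_pderiv_lt' {K : Type*} [CommSemiring K] {σ : Type*} [DecidableEq σ] (i : σ)
    (f : MvPolynomial σ K) (h : pderiv i f ≠ 0) :
    degreeOf i (pderiv i f) < degreeOf i f := by
  have hd : 0 < degreeOf i f := by
    rcases Nat.eq_zero_or_pos (degreeOf i f) with h0 | h0
    · exfalso
      apply h
      ext m
      rw [coeff_pderiv', coeff_zero]
      have : coeff (m + Finsupp.single i 1) f = 0 := by
        by_contra hc
        have hmem : m + Finsupp.single i 1 ∈ f.support := mem_support_iff.mpr hc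
        have := (degreeOf_le_iff.mp h0.le) _ hmem
        simp [Finsupp.single_apply] at this
      simp [this]
    · exact h0
  rw [degreeOf_lt_iff hd]
  intro m hm
  rw [mem_support_iff, coeff_pderiv'] at hm
  have hc : coeff (m + Finsupp.single i 1) f ≠ 0 := by
    intro h0; apply hm; simp [h0]
  have hmem : m + Finsupp.single i 1 ∈ f.support := mem_support_iff.mpr hc
  have := (degreeOf_le_iff (n := i) (f := f)).mp le_rfl _ hmem
  simp [Finsupp.single_apply] at this
  omega

lemma degreeOf_le_of_dvd' {K : Type*} [Field K] {p r : MvPolynomial (Fin 2) K}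
    (hpr : p ∣ r) (hr : r ≠ 0) : degreeOf 1 p ≤ degreeOf 1 r := by
  set e := renameEquiv K (Equiv.swap (0 : Fin 2) 1) with he
  set φ := MvPolynomial.finSuccEquiv K 1 with hφ
  have h1 : ∀ u : MvPolynomial (Fin 2) K, degreeOf 1 u = (φ (e u)).natDegree := by
    intro u
    rw [natDegree_finSuccEquiv]
    have := degreeOf_rename_of_injective (p := u)
      (f := Equiv.swap (0 : Fin 2) 1) (Equiv.injective _) 1
    simpa [e, renameEquiv_apply, Equiv.swap_apply_right] using this.symm
  rw [h1 p, h1 r]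
  apply Polynomial.natDegree_le_of_dvd
  · exact map_dvd (φ.toAlgHom.comp e.toAlgHom : _ →ₐ[K] _) hpr
  · simp only [ne_eq, EmbeddingLike.map_eq_zero_iff]
    exact hr

/-- If `f ∈ K[x,y]` is irreducible with `f_y ≠ 0`, `q_y = f^s` (with `s ≥ 1`),
and `f ∣ q_x`, then `f^s ∣ q_x`. -/
theorem stmt_5 (K : Type*) [Field K] [CharZero K]
    (f q : MvPolynomial (Fin 2) K) (s : ℕ)
    (hf : Irreducible f) (hfy : pderiv (1 : Fin 2) f ≠ 0) (hs : 1 ≤ s)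
    (hqy : pderiv (1 : Fin 2) q = f ^ s)
    (hdvd : f ∣ pderiv (0 : Fin 2) q) :
    f ^ s ∣ pderiv (0 : Fin 2) q := by
  have hprime : Prime f := UniqueFactorizationMonoid.irreducible_iff_prime.mp hf
  have hf0 : f ≠ 0 := hf.ne_zero
  have hnd : ¬ f ∣ pderiv (1 : Fin 2) f := fun hdf =>
    absurd (degreeOf_le_of_dvd' hdf hfy) (not_le.mpr (degreeOf_pderiv_lt' 1 f hfy))
  have hmix : pderiv (1 : Fin 2) (pderiv (0 : Fin 2) q)
      = (s : MvPolynomial (Fin 2) K) * f ^ (s - 1) * pderiv (0 : Fin 2) f := by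
    rw [pderiv_comm', hqy, pderiv_pow]
  have key : ∀ k, k ≤ s → f ^ k ∣ pderiv (0 : Fin 2) q := by
    intro k
    induction k with
    | zero => intro _; simp
    | succ k ih =>
      intro hk1
      rcases Nat.eq_zero_or_pos k with rfl | hkpos
      · simpa using hdvd
      obtain ⟨g, hg⟩ := ih (Nat.le_of_succ_le hk1)
      have heq : (k : MvPolynomial (Fin 2) K) * f ^ (k - 1) * pderiv (1 : Fin 2) f * g
          + f ^ k * pderiv (1 : Fin 2) g
          = (s : MvPolynomial (Fin 2) K) * f ^ (s - 1) * pderiv (0 : Fin 2) f := by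
        have h := hmix
        rw [hg] at h
        rw [← h, pderiv_mul, pderiv_pow]
      have heq2 : (k : MvPolynomial (Fin 2) K) * pderiv (1 : Fin 2) f * g
          + f * pderiv (1 : Fin 2) g
          = (s : MvPolynomial (Fin 2) K) * f ^ (s - k) * pderiv (0 : Fin 2) f := by
        apply mul_left_cancel₀ (pow_ne_zero (k - 1) hf0)
        calc f ^ (k - 1) * ((k : MvPolynomial (Fin 2) K) * pderiv (1 : Fin 2) f * g
              + f * pderiv (1 : Fin 2) g)
            = (k : MvPolynomial (Fin 2) K) * f ^ (k - 1) * pderiv (1 : Fin 2) f * g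
              + f ^ ((k - 1) + 1) * pderiv (1 : Fin 2) g := by ring
          _ = (s : MvPolynomial (Fin 2) K) * f ^ (s - 1) * pderiv (0 : Fin 2) f := by
              rw [Nat.sub_add_cancel hkpos]; exact heq
          _ = f ^ (k - 1) * ((s : MvPolynomial (Fin 2) K) * f ^ (s - k) * pderiv (0 : Fin 2) f) := by
              rw [show s - 1 = (k - 1) + (s - k) by omega, pow_add]; ring
      have hA : f ∣ (k : MvPolynomial (Fin 2) K) * pderiv (1 : Fin 2) f * g := by
        have h1 : f ∣ (s : MvPolynomial (Fin 2) K) * f ^ (s - k) * pderiv (0 : Fin 2) f :=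
          Dvd.dvd.mul_right (Dvd.dvd.mul_left (dvd_pow_self f (by omega : s - k ≠ 0)) _) _
        rw [← heq2] at h1
        have h2 : f ∣ f * pderiv (1 : Fin 2) g := dvd_mul_right _ _
        have := dvd_sub h1 h2
        simpa using this
      have hg' : f ∣ g := by
        rcases hprime.2.2 _ _ hA with h | h
        swap
        · exact h
        rcases hprime.2.2 _ _ h with h' | h'
        · exfalso
          have hku : IsUnit ((k : ℕ) : MvPolynomial (Fin 2) K) := by
            refine IsUnit.of_mul_eq_one (C (k : K)⁻¹) ?_
            rw [show ((k : ℕ) : MvPolynomial (Fin 2) K) = C (k : K) by simp, ← C_mul,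
              mul_inv_cancel₀ (Nat.cast_ne_zero.mpr hkpos.ne' : (k : K) ≠ 0), C_1]
          exact hf.not_isUnit (isUnit_of_dvd_unit h' hku)
        · exact absurd h' hnd
      obtain ⟨g', hgg⟩ := hg'
      exact ⟨g', by rw [hg, hgg, pow_succ]; ring⟩
  exact key s le_rfl
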